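/- Let d ≥ 2 and 1 ≤ p < d/(d-2) (no upper restriction when d = 2). The Bessel potential kernel G(x) = (1/(4π)) ∫₀^∞ exp(-π|x|²/(4s) - s/(4π)) s^{(2-d)/2} (ds/s) belongs to L^p(ℝ^d), and ‖G‖_{L^p(ℝ^d)} ≤ (2^{d(2/p - 1)} / (p^{d/(2p)} π^{(d/2)(1 - 1/p)})) · Γ(1 + (d - dp)/(2p)), where Γ is the Gamma function (the argument 1 + (d-dp)/(2p) is positive precisely because p < d/(d-2)). -/

import Mathlib

open MeasureTheory

/-- The Bessel potential kernel on `ℝ^d`, `d ≥ 2`: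
`G(x) = (1/(4π)) ∫₀^∞ exp(-π|x|²/(4s) - s/(4π)) s^{(2-d)/2} (ds/s)`. -/
noncomputable def besselKernel (d : ℕ) (x : EuclideanSpace ℝ (Fin d)) : ℝ :=
  (1 / (4 * Real.pi)) * ∫ s in Set.Ioi (0 : ℝ),
    Real.exp (-Real.pi * ‖x‖ ^ 2 / (4 * s) - s / (4 * Real.pi)) * s ^ ((2 - (d : ℝ)) / 2) / s

namespace BesselAux

open Real Set

/-- The optimal Jensen/Hölder weight. -/
noncomputable def w (d : ℕ) (p s : ℝ) : ℝ :=
  Real.exp (-s / (4 * Real.pi)) * s ^ ((d : ℝ) / (2 * p) - (d : ℝ) / 2)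

/-- `ψ = f^p · w^{1-p}` without the Gaussian factor. -/
noncomputable def ψ (d : ℕ) (p s : ℝ) : ℝ :=
  Real.exp (-s / (4 * Real.pi)) * s ^ ((d : ℝ) / (2 * p) - (d : ℝ))

/-- The integrand of the Bessel kernel. -/
noncomputable def f (d : ℕ) (x : EuclideanSpace ℝ (Fin d)) (s : ℝ) : ℝ :=
  Real.exp (-Real.pi * ‖x‖ ^ 2 / (4 * s) - s / (4 * Real.pi)) * s ^ ((2 - (d : ℝ)) / 2) / s

lemma w_pos {d : ℕ} {p s : ℝ} (hs : 0 < s) : 0 < w d p s := by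
  unfold w; positivity

lemma f_nonneg {d : ℕ} {x : EuclideanSpace ℝ (Fin d)} {s : ℝ} (hs : 0 < s) : 0 ≤ f d x s := by
  unfold f; positivity

lemma exp_rpow_eq {t q : ℝ} : Real.exp t ^ q = Real.exp (t * q) := (Real.exp_mul t q).symm

/-- Normal form of `f` for `s > 0`. -/
lemma f_eq {d : ℕ} (x : EuclideanSpace ℝ (Fin d)) {s : ℝ} (hs : 0 < s) :
    f d x s = Real.exp (-(Real.pi / (4 * s)) * ‖x‖ ^ 2 + (-s / (4 * Real.pi))
      + Real.log s * ((2 - (d : ℝ)) / 2 - 1)) := by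
  unfold f
  rw [Real.rpow_def_of_pos hs, ← Real.exp_add]
  rw [show -(Real.pi / (4 * s)) * ‖x‖ ^ 2 + (-s / (4 * Real.pi))
      + Real.log s * ((2 - (d : ℝ)) / 2 - 1)
      = (-Real.pi * ‖x‖ ^ 2 / (4 * s) - s / (4 * Real.pi)
        + Real.log s * ((2 - (d : ℝ)) / 2)) - Real.log s by ring]
  rw [Real.exp_sub, Real.exp_log hs]

lemma w_eq {d : ℕ} {p s : ℝ} (hs : 0 < s) :
    w d p s = Real.exp (-s / (4 * Real.pi) + Real.log s * ((d : ℝ) / (2 * p) - (d : ℝ) / 2)) := by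
  unfold w
  rw [Real.rpow_def_of_pos hs, ← Real.exp_add]

lemma ψ_eq {d : ℕ} {p s : ℝ} (hs : 0 < s) :
    ψ d p s = Real.exp (-s / (4 * Real.pi) + Real.log s * ((d : ℝ) / (2 * p) - (d : ℝ))) := by
  unfold ψ
  rw [Real.rpow_def_of_pos hs, ← Real.exp_add]

/-- The key algebraic identity behind the weighted Hölder bound. -/
lemma hoelder_pow {d : ℕ} {p s : ℝ} (hp0 : 0 < p) (hs : 0 < s)
    (x : EuclideanSpace ℝ (Fin d)) :
    (f d x s * w d p s ^ ((1 - p) / p)) ^ p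
      = ψ d p s * Real.exp (-(p * Real.pi / (4 * s)) * ‖x‖ ^ 2) := by
  rw [f_eq x hs, w_eq hs, ψ_eq hs, exp_rpow_eq, ← Real.exp_add, exp_rpow_eq, ← Real.exp_add]
  congr 1
  field_simp
  ring

/-- Splitting `f` against the weight. -/
lemma f_split {d : ℕ} {p s : ℝ} (hp0 : 0 < p) (hs : 0 < s) (x : EuclideanSpace ℝ (Fin d)) :
    f d x s = f d x s * w d p s ^ ((1 - p) / p) * w d p s ^ ((p - 1) / p) := by
  rw [mul_assoc, ← Real.rpow_add (w_pos hs)]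
  rw [show (1 - p) / p + (p - 1) / p = 0 by field_simp; ring]
  rw [Real.rpow_zero, mul_one]

lemma f_eq_one {d : ℕ} {s : ℝ} (hs : 0 < s) (x : EuclideanSpace ℝ (Fin d)) :
    f d x s = ψ d 1 s * Real.exp (-(1 * Real.pi / (4 * s)) * ‖x‖ ^ 2) := by
  rw [f_eq x hs, ψ_eq hs, ← Real.exp_add]
  congr 1
  field_simp
  ring

lemma psi_mul_gauss_int {d : ℕ} {p s : ℝ} (hp0 : 0 < p) (hs : 0 < s) :
    ψ d p s * (4 * s / p) ^ ((d : ℝ) / 2) = (4 / p) ^ ((d : ℝ) / 2) * w d p s := by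
  have h4p : (0:ℝ) < 4 / p := by positivity
  rw [show 4 * s / p = 4 / p * s by ring, Real.mul_rpow h4p.le hs.le, ψ_eq hs, w_eq hs,
    Real.rpow_def_of_pos hs, Real.rpow_def_of_pos h4p]
  simp only [← Real.exp_add]
  rw [Real.exp_eq_exp]
  ring

lemma alpha_pos {d : ℕ} {p : ℝ} (hp : 1 ≤ p) (hpd : p * ((d : ℝ) - 2) < d) :
    0 < 1 + ((d : ℝ) / (2 * p) - (d : ℝ) / 2) := by
  have hp0 : (0:ℝ) < p := lt_of_lt_of_le one_pos hp
  have h : 1 + ((d : ℝ) / (2 * p) - (d : ℝ) / 2) = ((d : ℝ) - p * ((d:ℝ) - 2)) / (2 * p) := by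
    field_simp
    ring
  rw [h]
  apply div_pos (by linarith) (by linarith)

/-- The `Γ`-type integral of the weight. -/
lemma w_lintegral {a : ℝ} (ha : 0 < a) :
    ∫⁻ s in Ioi (0:ℝ), ENNReal.ofReal (Real.exp (-s / (4 * Real.pi)) * s ^ (a - 1)) =
      ENNReal.ofReal ((4 * Real.pi) ^ a * Real.Gamma a) := by
  have hb : (0:ℝ) < 1 / (4 * Real.pi) := by positivity
  have hint : IntegrableOn (fun s : ℝ => s ^ (a - 1) * Real.exp (-(1 / (4 * Real.pi) * s)))
      (Ioi 0) := by
    have h := integrableOn_rpow_mul_exp_neg_mul_rpow (s := a - 1) (p := 1)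
      (b := 1 / (4 * Real.pi)) (by linarith) one_pos hb
    refine (integrableOn_congr_fun (fun s hs => ?_) measurableSet_Ioi).mp h
    rw [Real.rpow_one, neg_mul]
  have hnn : ∀ᵐ s ∂(volume.restrict (Ioi (0:ℝ))),
      (0:ℝ) ≤ s ^ (a - 1) * Real.exp (-(1 / (4 * Real.pi) * s)) :=
    (ae_restrict_iff' measurableSet_Ioi).2 (ae_of_all _ fun s hs => by
      have hs' : (0:ℝ) < s := hs
      positivity)
  rw [setLIntegral_congr_fun_ae measurableSet_Ioi (ae_of_all _ fun s (hs : (0:ℝ) < s) => by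
      rw [mul_comm, show -s / (4 * Real.pi) = -(1 / (4 * Real.pi) * s) by ring]),
    ← ofReal_integral_eq_lintegral_ofReal hint hnn,
    integral_rpow_mul_exp_neg_mul_Ioi ha hb, one_div_one_div]

/-- The Gaussian integral over `ℝ^d`. -/
lemma gauss_lintegral {d : ℕ} {p s : ℝ} (hp0 : 0 < p) (hs : 0 < s) :
    ∫⁻ x : EuclideanSpace ℝ (Fin d),
        ENNReal.ofReal (Real.exp (-(p * Real.pi / (4 * s)) * ‖x‖ ^ 2)) =
      ENNReal.ofReal ((4 * s / p) ^ ((d : ℝ) / 2)) := by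
  have hpi := Real.pi_pos
  have hb : (0:ℝ) < p * Real.pi / (4 * s) := by positivity
  have hbre : (0:ℝ) < (((p * Real.pi / (4 * s) : ℝ) : ℂ)).re := by
    rw [Complex.ofReal_re]; exact hb
  have hi : Integrable fun v : EuclideanSpace ℝ (Fin d) =>
      Real.exp (-(p * Real.pi / (4 * s)) * ‖v‖ ^ 2) := by
    have h0 := GaussianFourier.integrable_cexp_neg_mul_sq_norm_add
      (V := EuclideanSpace ℝ (Fin d)) (b := ((p * Real.pi / (4 * s) : ℝ) : ℂ)) hbre 0 0
    have h1 := h0.norm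
    refine h1.congr (ae_of_all _ fun v => ?_)
    simp [Complex.norm_exp, ← Complex.ofReal_pow, ← Complex.ofReal_mul, ← Complex.ofReal_neg,
      Complex.ofReal_re]
  rw [← ofReal_integral_eq_lintegral_ofReal hi (ae_of_all _ fun v => (Real.exp_pos _).le),
    GaussianFourier.integral_rexp_neg_mul_sq_norm hb]
  congr 1
  rw [finrank_euclideanSpace_fin]
  congr 1
  field_simp

lemma measurable_w (d : ℕ) (p : ℝ) : Measurable (w d p) :=
  (Real.measurable_exp.comp (measurable_id.neg.div_const _)).mul
    (measurable_id.pow measurable_const)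

lemma measurable_ψ (d : ℕ) (p : ℝ) : Measurable (ψ d p) :=
  (Real.measurable_exp.comp (measurable_id.neg.div_const _)).mul
    (measurable_id.pow measurable_const)

set_option maxHeartbeats 1000000 in
lemma measurable_f (d : ℕ) : Measurable (Function.uncurry (f d)) := by
  unfold Function.uncurry f
  have h1 : Measurable fun q : (EuclideanSpace ℝ (Fin d)) × ℝ =>
      -Real.pi * ‖q.1‖ ^ 2 / (4 * q.2) - q.2 / (4 * Real.pi) :=
    (((measurable_fst.norm.pow_const 2).const_mul (-Real.pi)).div
      (measurable_snd.const_mul 4)).sub (measurable_snd.div_const _)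
  exact ((Real.measurable_exp.comp h1).mul (measurable_snd.pow measurable_const)).div
    measurable_snd

set_option maxHeartbeats 1000000 in
lemma measurable_fx {d : ℕ} (x : EuclideanSpace ℝ (Fin d)) : Measurable (f d x) := by
  unfold f
  have h1 : Measurable fun s : ℝ => -Real.pi * ‖x‖ ^ 2 / (4 * s) - s / (4 * Real.pi) :=
    (measurable_const.div (measurable_id.const_mul 4)).sub (measurable_id.div_const _)
  exact ((Real.measurable_exp.comp h1).mul (measurable_id.pow measurable_const)).div
    measurable_id

/-- The weighted Hölder bound, pointwise in `x`. -/
lemma holder_bound (d : ℕ) {p : ℝ} (hp : 1 ≤ p) (x : EuclideanSpace ℝ (Fin d)) :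
    ∫⁻ s in Ioi (0:ℝ), ENNReal.ofReal (f d x s) ≤
      (∫⁻ s in Ioi (0:ℝ),
          ENNReal.ofReal (ψ d p s * Real.exp (-(p * Real.pi / (4 * s)) * ‖x‖ ^ 2))) ^ (1/p)
      * (∫⁻ s in Ioi (0:ℝ), ENNReal.ofReal (w d p s)) ^ (1 - 1/p) := by
  have hp0 : (0:ℝ) < p := lt_of_lt_of_le one_pos hp
  have hfx := measurable_fx x
  rcases eq_or_lt_of_le hp with hp1 | hp1
  · subst hp1
    simp only [div_one, ENNReal.rpow_one, sub_self, ENNReal.rpow_zero, mul_one]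
    refine le_of_eq (setLIntegral_congr_fun_ae measurableSet_Ioi
      (ae_of_all _ fun s (hs : (0:ℝ) < s) => ?_))
    rw [f_eq_one hs x]
  · have hq : p.HolderConjugate (p / (p - 1)) :=
      (Real.holderConjugate_iff_eq_conjExponent hp1).2 rfl
    have hm1 : AEMeasurable
        (fun s => ENNReal.ofReal (f d x s * w d p s ^ ((1 - p) / p)))
        (volume.restrict (Ioi 0)) :=
      (ENNReal.measurable_ofReal.comp
        (hfx.mul ((measurable_w d p).pow measurable_const))).aemeasurable
    have hm2 : AEMeasurable (fun s => ENNReal.ofReal (w d p s ^ ((p - 1) / p)))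
        (volume.restrict (Ioi 0)) :=
      (ENNReal.measurable_ofReal.comp
        ((measurable_w d p).pow measurable_const)).aemeasurable
    have H := ENNReal.lintegral_mul_le_Lp_mul_Lq (volume.restrict (Ioi 0)) hq hm1 hm2
    simp only [Pi.mul_apply] at H
    have e0 : ∫⁻ s in Ioi (0:ℝ), ENNReal.ofReal (f d x s)
        = ∫⁻ s in Ioi (0:ℝ), ENNReal.ofReal (f d x s * w d p s ^ ((1 - p) / p))
            * ENNReal.ofReal (w d p s ^ ((p - 1) / p)) :=
      setLIntegral_congr_fun_ae measurableSet_Ioi (ae_of_all _ fun s (hs : (0:ℝ) < s) => by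
        rw [← ENNReal.ofReal_mul
          (mul_nonneg (f_nonneg hs) (Real.rpow_nonneg (w_pos hs).le _)), ← f_split hp0 hs x])
    have e1 : ∫⁻ s in Ioi (0:ℝ), ENNReal.ofReal (f d x s * w d p s ^ ((1 - p) / p)) ^ p
        = ∫⁻ s in Ioi (0:ℝ),
            ENNReal.ofReal (ψ d p s * Real.exp (-(p * Real.pi / (4 * s)) * ‖x‖ ^ 2)) :=
      setLIntegral_congr_fun_ae measurableSet_Ioi (ae_of_all _ fun s (hs : (0:ℝ) < s) => by
        rw [ENNReal.ofReal_rpow_of_nonneg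
          (mul_nonneg (f_nonneg hs) (Real.rpow_nonneg (w_pos hs).le _)) hp0.le,
          hoelder_pow hp0 hs x])
    have e2 : ∫⁻ s in Ioi (0:ℝ), ENNReal.ofReal (w d p s ^ ((p - 1) / p)) ^ (p / (p - 1))
        = ∫⁻ s in Ioi (0:ℝ), ENNReal.ofReal (w d p s) :=
      setLIntegral_congr_fun_ae measurableSet_Ioi (ae_of_all _ fun s (hs : (0:ℝ) < s) => by
        rw [ENNReal.ofReal_rpow_of_nonneg (Real.rpow_nonneg (w_pos hs).le _)
            (le_of_lt (div_pos hp0 (by linarith))),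
          ← Real.rpow_mul (w_pos hs).le,
          show (p - 1) / p * (p / (p - 1)) = 1 by
            have h : p - 1 ≠ 0 := sub_ne_zero.mpr hp1.ne'
            field_simp,
          Real.rpow_one])
    have e3 : 1 / (p / (p - 1)) = 1 - 1/p := by
      rw [one_div_div]
      field_simp
    rw [e0]
    exact H.trans (le_of_eq (by rw [e1, e2, e3]))

lemma ψ_nonneg {d : ℕ} {p s : ℝ} (hs : 0 < s) : 0 ≤ ψ d p s := by
  unfold ψ; positivity

/-- The constant identity. -/
lemma const_eq {d : ℕ} {p : ℝ} (hp0 : 0 < p) :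
    (1 / (4 * Real.pi)) * (4 / p) ^ ((d:ℝ) / (2 * p))
        * (4 * Real.pi) ^ (1 + ((d:ℝ) / (2 * p) - (d:ℝ) / 2))
      = 2 ^ ((d:ℝ) * (2 / p - 1))
        / (p ^ ((d:ℝ) / (2 * p)) * Real.pi ^ (((d:ℝ) / 2) * (1 - 1 / p))) := by
  have hpi := Real.pi_pos
  have h4π : (0:ℝ) < 4 * Real.pi := by positivity
  have h4p : (0:ℝ) < 4 / p := by positivity
  have l4 : Real.log 4 = 2 * Real.log 2 := by
    rw [show (4:ℝ) = 2 ^ (2:ℕ) by norm_num, Real.log_pow]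
    push_cast; ring
  have lμ : Real.log (4 * Real.pi) = 2 * Real.log 2 + Real.log Real.pi := by
    rw [Real.log_mul (by norm_num) Real.pi_ne_zero, l4]
  have lp : Real.log (4 / p) = 2 * Real.log 2 - Real.log p := by
    rw [Real.log_div (by norm_num) hp0.ne', l4]
  rw [Real.rpow_def_of_pos h4π, Real.rpow_def_of_pos h4p, Real.rpow_def_of_pos hp0,
    Real.rpow_def_of_pos Real.pi_pos, Real.rpow_def_of_pos two_pos,
    show (1:ℝ) / (4 * Real.pi) = Real.exp (-Real.log (4 * Real.pi)) by
      rw [Real.exp_neg, Real.exp_log h4π, one_div],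
    lμ, lp]
  rw [← Real.exp_add, ← Real.exp_add, ← Real.exp_add, ← Real.exp_sub, Real.exp_eq_exp]
  field_simp
  ring

end BesselAux

open BesselAux Set

/-- For `d ≥ 2` and `1 ≤ p < d/(d-2)` (encoded as `p (d-2) < d`, no upper restriction when
`d = 2`), the Bessel potential kernel `G` belongs to `L^p(ℝ^d)` and
`‖G‖_{L^p(ℝ^d)} ≤ (2^{d(2/p-1)} / (p^{d/(2p)} π^{(d/2)(1-1/p)})) Γ(1 + (d - dp)/(2p))`. -/
theorem bessel_kernel_Lp_bound (d : ℕ) (hd : 2 ≤ d) (p : ℝ) (hp : 1 ≤ p)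
    (hpd : p * ((d : ℝ) - 2) < d) :
    Integrable (fun x : EuclideanSpace ℝ (Fin d) => |besselKernel d x| ^ p) ∧
    (∫ x : EuclideanSpace ℝ (Fin d), |besselKernel d x| ^ p) ^ (1 / p) ≤
      2 ^ ((d : ℝ) * (2 / p - 1)) /
        (p ^ ((d : ℝ) / (2 * p)) * Real.pi ^ (((d : ℝ) / 2) * (1 - 1 / p))) *
        Real.Gamma (1 + ((d : ℝ) - (d : ℝ) * p) / (2 * p)) := by
  classical
  have hpi := Real.pi_pos
  have hp0 : (0:ℝ) < p := lt_of_lt_of_le one_pos hp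
  have hα : 0 < 1 + ((d:ℝ) / (2 * p) - (d:ℝ) / 2) := alpha_pos hp hpd
  set M : ℝ := (4 * Real.pi) ^ (1 + ((d:ℝ) / (2 * p) - (d:ℝ) / 2))
      * Real.Gamma (1 + ((d:ℝ) / (2 * p) - (d:ℝ) / 2)) with hMdef
  have hMpos : 0 < M :=
    mul_pos (Real.rpow_pos_of_pos (by positivity) _) (Real.Gamma_pos_of_pos hα)
  set C : ℝ := (1 / (4 * Real.pi)) * (4 / p) ^ ((d:ℝ) / (2 * p)) * M with hCdef
  have hCpos : 0 < C := by
    apply mul_pos (mul_pos (by positivity) (by positivity)) hMpos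
  have hGarg : 1 + ((d:ℝ) - (d:ℝ) * p) / (2 * p) = 1 + ((d:ℝ) / (2 * p) - (d:ℝ) / 2) := by
    field_simp
  have hCrhs : C = 2 ^ ((d : ℝ) * (2 / p - 1)) /
      (p ^ ((d : ℝ) / (2 * p)) * Real.pi ^ (((d : ℝ) / 2) * (1 - 1 / p))) *
      Real.Gamma (1 + ((d : ℝ) - (d : ℝ) * p) / (2 * p)) := by
    rw [hGarg, hCdef, hMdef, ← const_eq hp0]
    ring
  -- the weight integral
  have hMint : ∫⁻ s in Ioi (0:ℝ), ENNReal.ofReal (w d p s) = ENNReal.ofReal M := by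
    rw [hMdef, ← w_lintegral hα]
    apply setLIntegral_congr_fun_ae measurableSet_Ioi
    refine ae_of_all _ fun s (hs : (0:ℝ) < s) => ?_
    unfold BesselAux.w
    rw [show 1 + ((d:ℝ) / (2 * p) - (d:ℝ) / 2) - 1 = (d:ℝ) / (2 * p) - (d:ℝ) / 2 by ring]
  -- measurability of the kernel
  have mG : Measurable (besselKernel d) := by
    have h1 : StronglyMeasurable fun x : EuclideanSpace ℝ (Fin d) =>
        ∫ s in Ioi (0:ℝ), f d x s :=
      (measurable_f d).stronglyMeasurable.integral_prod_right'
    exact measurable_const.mul h1.measurable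
  -- the pointwise bound
  have key : ∀ x : EuclideanSpace ℝ (Fin d), ENNReal.ofReal (|besselKernel d x| ^ p) ≤
      ENNReal.ofReal (1 / (4 * Real.pi)) ^ p *
        ((∫⁻ s in Ioi (0:ℝ),
            ENNReal.ofReal (ψ d p s * Real.exp (-(p * Real.pi / (4 * s)) * ‖x‖ ^ 2)))
          * ENNReal.ofReal M ^ (p - 1)) := by
    intro x
    have h1 : ENNReal.ofReal |besselKernel d x| ≤
        ENNReal.ofReal (1 / (4 * Real.pi)) * ∫⁻ s in Ioi (0:ℝ), ENNReal.ofReal (f d x s) := by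
      have hbk : |besselKernel d x| = (1 / (4 * Real.pi)) * |∫ s in Ioi (0:ℝ), f d x s| := by
        rw [show besselKernel d x = (1 / (4 * Real.pi)) * ∫ s in Ioi (0:ℝ), f d x s from rfl,
          abs_mul, abs_of_pos (by positivity)]
      rw [hbk, ENNReal.ofReal_mul (by positivity)]
      refine mul_le_mul_right ?_ _
      by_cases hi : IntegrableOn (f d x) (Ioi 0)
      · rw [abs_of_nonneg (setIntegral_nonneg measurableSet_Ioi fun s hs => f_nonneg hs),
          ofReal_integral_eq_lintegral_ofReal hi
            ((ae_restrict_iff' measurableSet_Ioi).2 (ae_of_all _ fun s hs => f_nonneg hs))]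
      · rw [integral_undef hi]
        simp
    calc ENNReal.ofReal (|besselKernel d x| ^ p)
        = ENNReal.ofReal |besselKernel d x| ^ p :=
          (ENNReal.ofReal_rpow_of_nonneg (abs_nonneg _) hp0.le).symm
      _ ≤ (ENNReal.ofReal (1 / (4 * Real.pi)) *
            ((∫⁻ s in Ioi (0:ℝ),
              ENNReal.ofReal (ψ d p s * Real.exp (-(p * Real.pi / (4 * s)) * ‖x‖ ^ 2))) ^ (1/p)
              * ENNReal.ofReal M ^ (1 - 1/p))) ^ p := by
          apply ENNReal.rpow_le_rpow _ hp0.le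
          refine h1.trans (mul_le_mul_right ?_ _)
          have h2 := holder_bound d hp x
          rwa [hMint] at h2
      _ = ENNReal.ofReal (1 / (4 * Real.pi)) ^ p *
            ((∫⁻ s in Ioi (0:ℝ),
              ENNReal.ofReal (ψ d p s * Real.exp (-(p * Real.pi / (4 * s)) * ‖x‖ ^ 2)))
              * ENNReal.ofReal M ^ (p - 1)) := by
          rw [ENNReal.mul_rpow_of_nonneg _ _ hp0.le, ENNReal.mul_rpow_of_nonneg _ _ hp0.le,
            ← ENNReal.rpow_mul, ← ENNReal.rpow_mul,
            show 1/p * p = 1 by field_simp,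
            show (1 - 1/p) * p = p - 1 by field_simp,
            ENNReal.rpow_one]
  -- Tonelli + Gaussian integral
  have tonelli : (∫⁻ x : EuclideanSpace ℝ (Fin d), ∫⁻ s in Ioi (0:ℝ),
        ENNReal.ofReal (ψ d p s * Real.exp (-(p * Real.pi / (4 * s)) * ‖x‖ ^ 2)))
      = ENNReal.ofReal ((4 / p) ^ ((d:ℝ) / 2)) * ENNReal.ofReal M := by
    have hm : AEMeasurable (Function.uncurry fun (x : EuclideanSpace ℝ (Fin d)) (s : ℝ) =>
        ENNReal.ofReal (ψ d p s * Real.exp (-(p * Real.pi / (4 * s)) * ‖x‖ ^ 2)))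
        ((volume : Measure (EuclideanSpace ℝ (Fin d))).prod (volume.restrict (Ioi 0))) := by
      apply Measurable.aemeasurable
      unfold Function.uncurry
      exact ENNReal.measurable_ofReal.comp (((measurable_ψ d p).comp measurable_snd).mul
        (Real.measurable_exp.comp
          (((measurable_const.div (measurable_snd.const_mul 4)).neg).mul
            ((measurable_fst.norm).pow_const 2))))
    rw [lintegral_lintegral_swap hm]
    have hinner : ∀ s ∈ Ioi (0:ℝ),
        (∫⁻ x : EuclideanSpace ℝ (Fin d),
            ENNReal.ofReal (ψ d p s * Real.exp (-(p * Real.pi / (4 * s)) * ‖x‖ ^ 2)))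
          = ENNReal.ofReal ((4 / p) ^ ((d:ℝ) / 2) * w d p s) := by
      intro s hs
      have hs' : (0:ℝ) < s := hs
      calc (∫⁻ x : EuclideanSpace ℝ (Fin d),
            ENNReal.ofReal (ψ d p s * Real.exp (-(p * Real.pi / (4 * s)) * ‖x‖ ^ 2)))
          = ∫⁻ x : EuclideanSpace ℝ (Fin d), ENNReal.ofReal (ψ d p s)
              * ENNReal.ofReal (Real.exp (-(p * Real.pi / (4 * s)) * ‖x‖ ^ 2)) := by
            simp only [ENNReal.ofReal_mul (ψ_nonneg hs')]
        _ = ENNReal.ofReal (ψ d p s) * ∫⁻ x : EuclideanSpace ℝ (Fin d),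
              ENNReal.ofReal (Real.exp (-(p * Real.pi / (4 * s)) * ‖x‖ ^ 2)) :=
            lintegral_const_mul' _ _ ENNReal.ofReal_ne_top
        _ = ENNReal.ofReal (ψ d p s) * ENNReal.ofReal ((4 * s / p) ^ ((d:ℝ) / 2)) := by
            rw [gauss_lintegral hp0 hs']
        _ = ENNReal.ofReal (ψ d p s * (4 * s / p) ^ ((d:ℝ) / 2)) :=
            (ENNReal.ofReal_mul (ψ_nonneg hs')).symm
        _ = ENNReal.ofReal ((4 / p) ^ ((d:ℝ) / 2) * w d p s) := by
            rw [psi_mul_gauss_int hp0 hs']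
    rw [setLIntegral_congr_fun_ae measurableSet_Ioi (ae_of_all _ hinner)]
    have h4p2 : (0:ℝ) ≤ (4 / p) ^ ((d:ℝ) / 2) := by positivity
    simp only [ENNReal.ofReal_mul h4p2]
    rw [lintegral_const_mul' _ _ ENNReal.ofReal_ne_top, hMint]
  -- the final lintegral bound
  have hCp : C ^ p = (1 / (4 * Real.pi)) ^ p
      * ((4 / p) ^ ((d:ℝ) / 2) * (M * M ^ (p - 1))) := by
    have hMM : M * M ^ (p - 1) = M ^ p := by
      calc M * M ^ (p - 1) = M ^ (1:ℝ) * M ^ (p - 1) := by rw [Real.rpow_one]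
        _ = M ^ (1 + (p - 1)) := (Real.rpow_add hMpos 1 (p - 1)).symm
        _ = M ^ p := by rw [show (1:ℝ) + (p - 1) = p by ring]
    rw [hMM, hCdef, Real.mul_rpow (by positivity) hMpos.le,
      Real.mul_rpow (by positivity) (by positivity), ← Real.rpow_mul (by positivity : (0:ℝ) ≤ 4/p),
      show (d:ℝ) / (2 * p) * p = (d:ℝ) / 2 by field_simp]
    ring
  have lhs_bound : ∫⁻ x : EuclideanSpace ℝ (Fin d), ENNReal.ofReal (|besselKernel d x| ^ p)
      ≤ ENNReal.ofReal (C ^ p) := by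
    have hctop : ENNReal.ofReal (1 / (4 * Real.pi)) ^ p ≠ ⊤ :=
      ENNReal.rpow_ne_top_of_nonneg hp0.le ENNReal.ofReal_ne_top
    have hMtop : ENNReal.ofReal M ^ (p - 1) ≠ ⊤ :=
      ENNReal.rpow_ne_top_of_nonneg (by linarith) ENNReal.ofReal_ne_top
    calc ∫⁻ x : EuclideanSpace ℝ (Fin d), ENNReal.ofReal (|besselKernel d x| ^ p)
        ≤ ∫⁻ x : EuclideanSpace ℝ (Fin d), ENNReal.ofReal (1 / (4 * Real.pi)) ^ p *
            ((∫⁻ s in Ioi (0:ℝ),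
              ENNReal.ofReal (ψ d p s * Real.exp (-(p * Real.pi / (4 * s)) * ‖x‖ ^ 2)))
              * ENNReal.ofReal M ^ (p - 1)) := lintegral_mono key
      _ = ENNReal.ofReal (1 / (4 * Real.pi)) ^ p *
            ((∫⁻ x : EuclideanSpace ℝ (Fin d), ∫⁻ s in Ioi (0:ℝ),
              ENNReal.ofReal (ψ d p s * Real.exp (-(p * Real.pi / (4 * s)) * ‖x‖ ^ 2)))
              * ENNReal.ofReal M ^ (p - 1)) := by
          rw [lintegral_const_mul' _ _ hctop, lintegral_mul_const' _ _ hMtop]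
      _ = ENNReal.ofReal (C ^ p) := by
          rw [tonelli, hCp,
            ENNReal.ofReal_rpow_of_pos (show (0:ℝ) < 1 / (4 * Real.pi) by positivity),
            ENNReal.ofReal_rpow_of_pos hMpos,
            ← ENNReal.ofReal_mul (by positivity : (0:ℝ) ≤ (4 / p) ^ ((d:ℝ) / 2)),
            ← ENNReal.ofReal_mul (by positivity : (0:ℝ) ≤ (4 / p) ^ ((d:ℝ) / 2) * M),
            ← ENNReal.ofReal_mul (by positivity : (0:ℝ) ≤ (1 / (4 * Real.pi)) ^ p)]
          congr 1
          ring
  -- conclusion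
  have hnn : 0 ≤ᵐ[(volume : Measure (EuclideanSpace ℝ (Fin d)))]
      fun x => |besselKernel d x| ^ p :=
    ae_of_all _ fun x => by positivity
  have hmeasGp : AEStronglyMeasurable
      (fun x : EuclideanSpace ℝ (Fin d) => |besselKernel d x| ^ p) volume :=
    ((mG.abs).pow measurable_const).aestronglyMeasurable
  have hfin : Integrable (fun x : EuclideanSpace ℝ (Fin d) => |besselKernel d x| ^ p) := by
    refine ⟨hmeasGp, ?_⟩
    rw [hasFiniteIntegral_iff_ofReal hnn]
    exact lt_of_le_of_lt lhs_bound ENNReal.ofReal_lt_top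
  refine ⟨hfin, ?_⟩
  have hint : ∫ x : EuclideanSpace ℝ (Fin d), |besselKernel d x| ^ p
      = (∫⁻ x : EuclideanSpace ℝ (Fin d), ENNReal.ofReal (|besselKernel d x| ^ p)).toReal :=
    integral_eq_lintegral_of_nonneg_ae hnn hmeasGp
  have h2 : ∫ x : EuclideanSpace ℝ (Fin d), |besselKernel d x| ^ p ≤ C ^ p := by
    rw [hint]
    refine le_trans (ENNReal.toReal_mono ENNReal.ofReal_ne_top lhs_bound) ?_
    rw [ENNReal.toReal_ofReal (by positivity)]
  have h3 : (∫ x : EuclideanSpace ℝ (Fin d), |besselKernel d x| ^ p) ^ (1/p) ≤ C := by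
    calc (∫ x : EuclideanSpace ℝ (Fin d), |besselKernel d x| ^ p) ^ (1/p)
        ≤ (C ^ p) ^ (1/p) := by
          apply Real.rpow_le_rpow (integral_nonneg fun x => by positivity) h2 (by positivity)
      _ = C := by
          rw [← Real.rpow_mul hCpos.le, mul_one_div_cancel hp0.ne', Real.rpow_one]
  rwa [hCrhs] at h3
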